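/- Let L, L′ ∈ X^c_{n,d}. For all i, j ∈ ℤ the quotient (L_{i−1} + L_i ∩ L′_j)/(L_{i−1} + L_i ∩ L′_{j−1}) is a finite-dimensional k-vector space, and setting a_{ij} = dim_k (L_{i−1} + L_i ∩ L′_j)/(L_{i−1} + L_i ∩ L′_{j−1}), one has a_{−i,−j} = a_{ij} for all i, j ∈ ℤ. -/

import Mathlib

open scoped Classical

noncomputable section

namespace AffLat

variable (k : Type*) [Field k]

/-- The uniformizer `ε ∈ F = k((ε))`. -/
def eps : LaurentSeries k := algebraMap (PowerSeries k) (LaurentSeries k) PowerSeries.X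

/-- The subring `𝔬 = k[[ε]]` of `F = k((ε))`. -/
def oring : Subring (LaurentSeries k) :=
  (algebraMap (PowerSeries k) (LaurentSeries k)).range

variable {k}
variable {V : Type*} [AddCommGroup V] [Module (LaurentSeries k) V]
  [Module (PowerSeries k) V] [IsScalarTower (PowerSeries k) (LaurentSeries k) V]

/-- A lattice in `V`: a finitely generated `𝔬`-submodule `L` with `F·L = V`. -/
def IsLat (L : Submodule (PowerSeries k) V) : Prop :=
  L.FG ∧ Submodule.span (LaurentSeries k) (L : Set V) = ⊤

/-- The dual `L^# = {v ∈ V | ∀ x ∈ L, (v, x) ∈ 𝔬}` of an `𝔬`-submodule `L` with respect to a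
bilinear form `Φ`. -/
def sharp (Φ : V →ₗ[LaurentSeries k] V →ₗ[LaurentSeries k] LaurentSeries k)
    (L : Submodule (PowerSeries k) V) : Submodule (PowerSeries k) V where
  carrier := {v | ∀ x ∈ L, Φ v x ∈ oring k}
  zero_mem' := fun x _ => by rw [map_zero, LinearMap.zero_apply]; exact zero_mem _
  add_mem' := fun {a b} ha hb x hx => by
    rw [map_add, LinearMap.add_apply]; exact add_mem (ha x hx) (hb x hx)
  smul_mem' := fun c v hv x hx => by
    rw [← algebraMap_smul (LaurentSeries k) c v, map_smul, LinearMap.smul_apply, smul_eq_mul]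
    exact mul_mem ⟨c, rfl⟩ (hv x hx)

/-- The `𝔬`-submodule `a • L` for a scalar `a ∈ F`. -/
def esmul (a : LaurentSeries k) (L : Submodule (PowerSeries k) V) :
    Submodule (PowerSeries k) V where
  carrier := (fun v => a • v) '' (L : Set V)
  zero_mem' := ⟨0, L.zero_mem, smul_zero a⟩
  add_mem' := by
    rintro x y ⟨x', hx', rfl⟩ ⟨y', hy', rfl⟩
    exact ⟨x' + y', L.add_mem hx' hy', smul_add a x' y'⟩
  smul_mem' := by
    rintro c x ⟨x', hx', rfl⟩
    refine ⟨c • x', L.smul_mem c hx', ?_⟩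
    show a • (c • x') = c • (a • x')
    rw [← algebraMap_smul (LaurentSeries k) c x', ← algebraMap_smul (LaurentSeries k) c (a • x'),
      smul_smul, smul_smul, mul_comm]

/-- The quotient `p / s` of an `𝔬`-submodule `p` by the `𝔬`-submodule `s ∩ p`. -/
abbrev relQ (p s : Submodule (PowerSeries k) V) : Type _ :=
  ↥p ⧸ (s.comap p.subtype)

/-- The dimension over `k` of an `𝔬`-module (with the `k`-action coming from
`k → 𝔬 = k[[ε]]`). -/
def kdim (k : Type*) [Field k] (Q : Type*) [AddCommGroup Q] [Module (PowerSeries k) Q] : ℕ :=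
  @Module.finrank k Q _ _ (Module.compHom Q (PowerSeries.C : k →+* PowerSeries k))

/-- Finite-dimensionality over `k` of an `𝔬`-module (with the `k`-action coming from
`k → 𝔬 = k[[ε]]`). -/
def kfinite (k : Type*) [Field k] (Q : Type*) [AddCommGroup Q] [Module (PowerSeries k) Q] :
    Prop :=
  @FiniteDimensional k Q _ _ (Module.compHom Q (PowerSeries.C : k →+* PowerSeries k))

end AffLat

namespace AffLat

variable {k : Type*} [Field k]
variable {V : Type*} [AddCommGroup V] [Module (LaurentSeries k) V]
  [Module (PowerSeries k) V] [IsScalarTower (PowerSeries k) (LaurentSeries k) V]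

/-- The set `X^c_{n,d}`: `n`-periodic self-dual chains of lattices, i.e. `L i ⊆ L (i+1)`,
`L i = ε L (i+n)` and `(L i)^# = L (-i-1)` for all `i ∈ ℤ`. -/
def IsXc (Φ : V →ₗ[LaurentSeries k] V →ₗ[LaurentSeries k] LaurentSeries k)
    (n : ℕ) (L : ℤ → Submodule (PowerSeries k) V) : Prop :=
  (∀ i : ℤ, IsLat (L i)) ∧
  (∀ i : ℤ, L i ≤ L (i + 1)) ∧
  (∀ i : ℤ, ∀ v : V, v ∈ L i ↔ ∃ w ∈ L (i + n), v = eps k • w) ∧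
  (∀ i : ℤ, sharp Φ (L i) = L (-i - 1))

end AffLat

namespace AffLat

variable {k : Type*} [Field k]
variable {V : Type*} [AddCommGroup V] [Module (LaurentSeries k) V]
  [Module (PowerSeries k) V] [IsScalarTower (PowerSeries k) (LaurentSeries k) V]

theorem mem_oring_iff {f : LaurentSeries k} : f ∈ oring k ↔ ∀ n : ℤ, n < 0 → f.coeff n = 0 := by
  constructor
  · rintro ⟨g, rfl⟩ n hn
    rw [LaurentSeries.coe_algebraMap, HahnSeries.ofPowerSeries_apply]
    exact HahnSeries.embDomain_notin_range (by simpa using hn.not_ge)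
  · intro h
    refine ⟨PowerSeries.mk fun n => f.coeff (n : ℤ), ?_⟩
    rw [LaurentSeries.coe_algebraMap]
    ext n
    rcases le_or_gt 0 n with hn | hn
    · lift n to ℕ using hn
      rw [HahnSeries.ofPowerSeries_apply_coeff, PowerSeries.coeff_mk]
    · rw [h n hn, HahnSeries.ofPowerSeries_apply,
        HahnSeries.embDomain_notin_range (by simpa using hn.not_ge)]

theorem eps_mul_coeff (f : LaurentSeries k) (n : ℤ) : (eps k * f).coeff n = f.coeff (n - 1) := by
  rw [eps, LaurentSeries.coe_algebraMap, HahnSeries.ofPowerSeries_X]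
  have h : ((HahnSeries.single (1:ℤ)) (1:k) * f).coeff (n - 1 + 1) = 1 * f.coeff (n-1) :=
    HahnSeries.coeff_single_mul_add
  rw [sub_add_cancel] at h
  rw [h, one_mul]

theorem mem_oring_of_eps_mul {f : LaurentSeries k} (h : eps k * f ∈ oring k)
    (h1 : f.coeff (-1) = 0) : f ∈ oring k := by
  rw [mem_oring_iff] at h ⊢
  intro n hn
  rcases eq_or_lt_of_le (Int.add_one_le_iff.mpr hn) with hn' | hn'
  · rw [show n = -1 by omega, h1]
  · have := h (n + 1) (by omega)
    rwa [eps_mul_coeff, add_sub_cancel_right] at this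

theorem C_mul_coeff (a : k) (f : LaurentSeries k) (n : ℤ) :
    (algebraMap (PowerSeries k) (LaurentSeries k) (PowerSeries.C a) * f).coeff n
      = a * f.coeff n := by
  rw [LaurentSeries.coe_algebraMap, HahnSeries.ofPowerSeries_C, HahnSeries.C_mul_eq_smul,
    HahnSeries.coeff_smul, smul_eq_mul]

theorem eps_smul_eq (x : V) : eps k • x = (PowerSeries.X : PowerSeries k) • x := by
  rw [eps, algebraMap_smul]

theorem algebraMap_injective' :
    Function.Injective (algebraMap (PowerSeries k) (LaurentSeries k)) :=
  IsFractionRing.injective _ _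

theorem eps_ne_zero : (eps k) ≠ 0 := by
  rw [eps]
  intro h
  exact PowerSeries.X_ne_zero (R := k) (algebraMap_injective' (h.trans (map_zero _).symm))

variable {Φ : V →ₗ[LaurentSeries k] V →ₗ[LaurentSeries k] LaurentSeries k}

theorem mem_sharp {L : Submodule (PowerSeries k) V} {v : V} :
    v ∈ sharp Φ L ↔ ∀ x ∈ L, Φ v x ∈ oring k := Iff.rfl

theorem skew (halt : ∀ v : V, Φ v v = 0) (x y : V) : Φ x y = - Φ y x := by
  have h : Φ x y + Φ y x = 0 := by
    have h0 := halt (x + y)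
    simp only [map_add, LinearMap.add_apply, halt x, halt y, zero_add, add_zero] at h0
    rw [add_comm]; exact h0
  exact eq_neg_of_add_eq_zero_left h

theorem sharp_antitone {A B : Submodule (PowerSeries k) V} (h : A ≤ B) :
    sharp Φ B ≤ sharp Φ A := fun v hv x hx => hv x (h hx)

theorem sharp_sup (A B : Submodule (PowerSeries k) V) :
    sharp Φ (A ⊔ B) = sharp Φ A ⊓ sharp Φ B := by
  apply le_antisymm
  · exact le_inf (sharp_antitone le_sup_left) (sharp_antitone le_sup_right)
  · rintro v ⟨hvA, hvB⟩ x hx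
    obtain ⟨a, ha, b, hb, rfl⟩ := Submodule.mem_sup.mp hx
    rw [map_add]
    exact add_mem (hvA a ha) (hvB b hb)

theorem mem_sharp_span {S : Set V} {v : V} :
    v ∈ sharp Φ (Submodule.span (PowerSeries k) S) ↔ ∀ x ∈ S, Φ v x ∈ oring k := by
  constructor
  · exact fun h x hx => h x (Submodule.subset_span hx)
  · intro h x hx
    induction hx using Submodule.span_induction with
    | mem x hx => exact h x hx
    | zero => rw [map_zero]; exact zero_mem _
    | add x y _ _ hx hy => rw [map_add]; exact add_mem hx hy
    | smul r x _ hx =>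
        rw [← algebraMap_smul (LaurentSeries k) r x, map_smul, smul_eq_mul]
        exact mul_mem ⟨r, rfl⟩ hx

theorem fg_of_le {A B : Submodule (PowerSeries k) V} (hB : B.FG) (h : A ≤ B) : A.FG := by
  haveI := isNoetherian_of_fg_of_noetherian B hB
  have hA : A = Submodule.map B.subtype (A.comap B.subtype) := by
    rw [Submodule.map_comap_eq, Submodule.range_subtype]
    exact (inf_eq_right.mpr h).symm
  rw [hA]
  exact (IsNoetherian.noetherian _).map _

end AffLat
namespace AffLat

variable {k : Type*} [Field k]
variable {V : Type*} [AddCommGroup V] [Module (LaurentSeries k) V]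
  [Module (PowerSeries k) V] [IsScalarTower (PowerSeries k) (LaurentSeries k) V]
variable {Φ : V →ₗ[LaurentSeries k] V →ₗ[LaurentSeries k] LaurentSeries k}

theorem exists_pow_smul_mem {L : Submodule (PowerSeries k) V}
    (hL : Submodule.span (LaurentSeries k) (L : Set V) = ⊤) (v : V) :
    ∃ m : ℕ, (PowerSeries.X ^ m : PowerSeries k) • v ∈ L := by
  have hv : v ∈ Submodule.span (LaurentSeries k) (L : Set V) := hL ▸ Submodule.mem_top
  induction hv using Submodule.span_induction with
  | mem x hx => exact ⟨0, by simpa using hx⟩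
  | zero => exact ⟨0, by simp⟩
  | add x y _ _ hx hy =>
      obtain ⟨m, hm⟩ := hx; obtain ⟨l, hl⟩ := hy
      refine ⟨max m l, ?_⟩
      rw [smul_add]
      refine Submodule.add_mem _ ?_ ?_
      · have h : (PowerSeries.X ^ max m l : PowerSeries k)
            = PowerSeries.X ^ (max m l - m) * PowerSeries.X ^ m := by
          rw [← pow_add]; congr 1; omega
        rw [h, mul_smul]; exact L.smul_mem _ hm
      · have h : (PowerSeries.X ^ max m l : PowerSeries k)
            = PowerSeries.X ^ (max m l - l) * PowerSeries.X ^ l := by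
          rw [← pow_add]; congr 1; omega
        rw [h, mul_smul]; exact L.smul_mem _ hl
  | smul c x _ hx =>
      obtain ⟨m, hm⟩ := hx
      obtain ⟨⟨r, s⟩, hrs⟩ :=
        IsLocalization.surj (Submonoid.powers (PowerSeries.X : PowerSeries k)) c
      obtain ⟨l, hl⟩ := s.2
      refine ⟨l + m, ?_⟩
      have key : (PowerSeries.X ^ (l + m) : PowerSeries k) • (c • x)
          = r • ((PowerSeries.X ^ m : PowerSeries k) • x) := by
        rw [← algebraMap_smul (LaurentSeries k) (PowerSeries.X ^ (l + m) : PowerSeries k)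
            (c • x), smul_smul,
          ← algebraMap_smul (LaurentSeries k) r ((PowerSeries.X ^ m : PowerSeries k) • x),
          ← algebraMap_smul (LaurentSeries k) (PowerSeries.X ^ m : PowerSeries k) x, smul_smul]
        congr 1
        have hl' : (PowerSeries.X : PowerSeries k) ^ l = ↑s := hl
        rw [pow_add, map_mul, hl', ← hrs]
        ring
      rw [key]
      exact L.smul_mem _ hm

theorem exists_pow_smul_le {A B : Submodule (PowerSeries k) V} (hA : A.FG)
    (hB : Submodule.span (LaurentSeries k) (B : Set V) = ⊤) :
    ∃ m : ℕ, ∀ x ∈ A, (PowerSeries.X ^ m : PowerSeries k) • x ∈ B := by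
  obtain ⟨S, rfl⟩ := hA
  have hf : ∀ x : V, ∃ m : ℕ, (PowerSeries.X ^ m : PowerSeries k) • x ∈ B :=
    fun x => exists_pow_smul_mem hB x
  choose f hf using hf
  refine ⟨S.sup f, fun x hx => ?_⟩
  induction hx using Submodule.span_induction with
  | mem x hx =>
      have h : (PowerSeries.X ^ S.sup f : PowerSeries k)
          = PowerSeries.X ^ (S.sup f - f x) * PowerSeries.X ^ (f x) := by
        rw [← pow_add]; congr 1
        have := Finset.le_sup hx (f := f)
        omega
      rw [h, mul_smul]
      exact B.smul_mem _ (hf x)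
  | zero => simp
  | add x y _ _ hx hy => rw [smul_add]; exact B.add_mem hx hy
  | smul r x _ hx => rw [smul_comm]; exact B.smul_mem _ hx

theorem isLat_inf {A B : Submodule (PowerSeries k) V} (hA : IsLat A) (hB : IsLat B) :
    IsLat (A ⊓ B) := by
  refine ⟨fg_of_le hA.1 inf_le_left, ?_⟩
  obtain ⟨m, hm⟩ := exists_pow_smul_le hA.1 hB.2
  rw [eq_top_iff, ← hA.2]
  refine Submodule.span_le.mpr fun x hx => ?_
  have h1 : (PowerSeries.X ^ m : PowerSeries k) • x ∈ A ⊓ B := ⟨A.smul_mem _ hx, hm x hx⟩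
  have h2 : x = ((eps k) ^ m)⁻¹ • ((eps k) ^ m • x) := by
    rw [smul_smul, inv_mul_cancel₀ (pow_ne_zero _ eps_ne_zero), one_smul]
  have h3 : (eps k) ^ m • x = (PowerSeries.X ^ m : PowerSeries k) • x := by
    rw [eps, ← map_pow, algebraMap_smul]
  rw [SetLike.mem_coe, h2, h3]
  exact Submodule.smul_mem _ _ (Submodule.subset_span h1)

theorem lat_basis {L : Submodule (PowerSeries k) V} (hL : IsLat L) :
    ∃ (m : ℕ) (b : Module.Basis (Fin m) (LaurentSeries k) V),
      L = Submodule.span (PowerSeries k) (Set.range ⇑b) := by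
  haveI : Module.Finite (PowerSeries k) ↥L := Module.Finite.iff_fg.mpr hL.1
  haveI : NoZeroSMulDivisors (PowerSeries k) ↥L := by
    refine ⟨fun {r x} hrx => ?_⟩
    rcases eq_or_ne r 0 with hr | hr
    · exact Or.inl hr
    refine Or.inr ?_
    have h1 : r • (x : V) = 0 := by
      rw [← Submodule.coe_smul, hrx, Submodule.coe_zero]
    rw [← algebraMap_smul (LaurentSeries k) r (x : V)] at h1
    have h2 : algebraMap (PowerSeries k) (LaurentSeries k) r ≠ 0 := fun h =>
      hr (algebraMap_injective' (h.trans (map_zero _).symm))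
    have h3 : (x : V) = 0 := by
      have h4 := congrArg
        (fun w => (algebraMap (PowerSeries k) (LaurentSeries k) r)⁻¹ • w) h1
      simp only [smul_smul, smul_zero] at h4
      rw [inv_mul_cancel₀ h2, one_smul] at h4
      exact h4
    exact Subtype.ext h3
  haveI : Module.Free (PowerSeries k) ↥L := Module.free_of_finite_type_torsion_free'
  set ι := Module.Free.ChooseBasisIndex (PowerSeries k) ↥L with hι
  let b0 : Module.Basis ι (PowerSeries k) ↥L := Module.Free.chooseBasis _ _
  haveI : Fintype ι := Module.Free.ChooseBasisIndex.fintype _ _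
  set v : ι → V := fun i => ((b0 i : ↥L) : V) with hv
  have hspanR : L = Submodule.span (PowerSeries k) (Set.range v) := by
    conv_lhs => rw [← Submodule.map_subtype_top L, ← b0.span_eq]
    rw [Submodule.map_span]
    congr 1
    rw [← Set.range_comp]
    rfl
  have hsub : (L : Set V) ⊆ ↑(Submodule.span (LaurentSeries k) (Set.range v)) := by
    intro x hx
    rw [hspanR] at hx
    exact Submodule.span_le_restrictScalars (PowerSeries k) (LaurentSeries k) (Set.range v) hx
  have hspanF : Submodule.span (LaurentSeries k) (Set.range v) = ⊤ := by
    rw [eq_top_iff, ← hL.2]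
    exact Submodule.span_le.mpr hsub
  have hindep : LinearIndependent (LaurentSeries k) v := by
    rw [Fintype.linearIndependent_iff]
    intro g hg
    obtain ⟨den, hden⟩ :=
      IsLocalization.exist_integer_multiples (Submonoid.powers (PowerSeries.X : PowerSeries k))
        Finset.univ g
    have hden' : ∀ i : ι, ∃ r : PowerSeries k,
        algebraMap (PowerSeries k) (LaurentSeries k) r = (den : PowerSeries k) • g i :=
      fun i => hden i (Finset.mem_univ i)
    choose rr hrr using hden'
    have hsum : (∑ i, rr i • b0 i) = 0 := by
      apply Subtype.ext
      rw [Submodule.coe_zero]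
      have hsmul : ∀ i : ι, rr i • (v i) = ((den : PowerSeries k) • g i) • v i := by
        intro i
        rw [← hrr i, algebraMap_smul]
      have hco : ((∑ i, rr i • b0 i : ↥L) : V) = ∑ i, rr i • v i := by
        simp [hv]
      rw [hco]
      calc (∑ i, rr i • v i)
          = ∑ i, ((den : PowerSeries k) • g i) • v i := by
            exact Finset.sum_congr rfl fun i _ => hsmul i
        _ = algebraMap (PowerSeries k) (LaurentSeries k) (den : PowerSeries k)
              • ∑ i, g i • v i := by
            rw [Finset.smul_sum]
            refine Finset.sum_congr rfl fun i _ => ?_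
            rw [smul_smul, Algebra.smul_def]
        _ = 0 := by rw [hg, smul_zero]
    have hr0 : ∀ i, rr i = 0 := by
      have h := Fintype.linearIndependent_iff.mp b0.linearIndependent rr hsum
      exact h
    intro i
    have h1 : (den : PowerSeries k) • g i = 0 := by rw [← hrr i, hr0 i, map_zero]
    have h2 : algebraMap (PowerSeries k) (LaurentSeries k) (den : PowerSeries k) * g i = 0 := by
      rw [← Algebra.smul_def, h1]
    rcases mul_eq_zero.mp h2 with h | h
    · exfalso
      obtain ⟨l, hl⟩ := den.2
      have hl' : (PowerSeries.X : PowerSeries k) ^ l = ↑den := hl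
      have hden0 : ((den : PowerSeries k)) = 0 :=
        algebraMap_injective' (h.trans (map_zero _).symm)
      rw [← hl'] at hden0
      exact pow_ne_zero l (PowerSeries.X_ne_zero (R := k)) hden0
    · exact h
  have htop : ⊤ ≤ Submodule.span (LaurentSeries k) (Set.range v) := by rw [hspanF]
  refine ⟨Fintype.card ι, (Module.Basis.mk hindep htop).reindex (Fintype.equivFin ι), ?_⟩
  rw [hspanR]
  congr 1
  rw [Module.Basis.coe_reindex, Module.Basis.coe_mk]
  exact ((Fintype.equivFin ι).symm.surjective.range_comp v).symm

end AffLat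
namespace AffLat

variable {k : Type*} [Field k]
variable {V : Type*} [AddCommGroup V] [Module (LaurentSeries k) V]
  [Module (PowerSeries k) V] [IsScalarTower (PowerSeries k) (LaurentSeries k) V]
variable {Φ : V →ₗ[LaurentSeries k] V →ₗ[LaurentSeries k] LaurentSeries k}

theorem phi_sum {m : ℕ} (b c : Fin m → V)
    (hc : ∀ i j, Φ (c i) (b j) = if i = j then 1 else 0)
    (g : Fin m → LaurentSeries k) (j : Fin m) :
    Φ (∑ i, g i • c i) (b j) = g j := by
  rw [map_sum, LinearMap.sum_apply]
  have h : ∀ i, Φ (g i • c i) (b j) = if i = j then g i else 0 := by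
    intro i
    rw [map_smul, LinearMap.smul_apply, smul_eq_mul, hc i j]
    split <;> simp
  rw [Finset.sum_congr rfl fun i _ => h i]
  simp

set_option synthInstance.maxHeartbeats 1000000 in
theorem exists_dual_family [FiniteDimensional (LaurentSeries k) V]
    (hnondeg : ∀ v : V, (∀ w : V, Φ v w = 0) → v = 0)
    {m : ℕ} (b : Module.Basis (Fin m) (LaurentSeries k) V) :
    ∃ c : Fin m → V, ∀ i j, Φ (c i) (b j) = if i = j then 1 else 0 := by
  have hinj : Function.Injective Φ := by
    intro x y hxy
    have h : ∀ w, Φ (x - y) w = 0 := by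
      intro w
      rw [map_sub, LinearMap.sub_apply, hxy, sub_self]
    have := hnondeg (x - y) h
    exact sub_eq_zero.mp this
  have hsurj : Function.Surjective Φ :=
    (LinearMap.injective_iff_surjective_of_finrank_eq_finrank
      Subspace.dual_finrank_eq.symm).mp hinj
  choose c hcc using fun i => hsurj (b.coord i)
  refine ⟨c, fun i j => ?_⟩
  have h1 : Φ (c i) (b j) = (b.coord i) (b j) := by rw [hcc i]
  rw [h1, Module.Basis.coord_apply, Module.Basis.repr_self, Finsupp.single_apply]
  exact if_congr eq_comm rfl rfl

theorem dual_repr (hnondeg : ∀ v : V, (∀ w : V, Φ v w = 0) → v = 0)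
    {m : ℕ} (b : Module.Basis (Fin m) (LaurentSeries k) V) (c : Fin m → V)
    (hc : ∀ i j, Φ (c i) (b j) = if i = j then 1 else 0) (v : V) :
    v = ∑ i, Φ v (b i) • c i := by
  have hz : ∀ w, Φ (v - ∑ i, Φ v (b i) • c i) w = 0 := by
    have hmap : Φ (v - ∑ i, Φ v (b i) • c i) = 0 := by
      apply b.ext
      intro j
      rw [map_sub, LinearMap.sub_apply, phi_sum b c hc (fun i => Φ v (b i)) j,
        sub_self, LinearMap.zero_apply]
    intro w
    rw [hmap, LinearMap.zero_apply]
  have := hnondeg _ hz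
  exact (sub_eq_zero.mp this)

theorem sharp_span_eq (hnondeg : ∀ v : V, (∀ w : V, Φ v w = 0) → v = 0)
    {m : ℕ} (b : Module.Basis (Fin m) (LaurentSeries k) V) (c : Fin m → V)
    (hc : ∀ i j, Φ (c i) (b j) = if i = j then 1 else 0) :
    sharp Φ (Submodule.span (PowerSeries k) (Set.range ⇑b))
      = Submodule.span (PowerSeries k) (Set.range c) := by
  apply le_antisymm
  · intro v hv
    rw [mem_sharp_span] at hv
    have h : ∀ i, Φ v (b i) ∈ oring k := fun i => hv _ ⟨i, rfl⟩
    have h' : ∀ i : Fin m, ∃ r : PowerSeries k,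
        algebraMap (PowerSeries k) (LaurentSeries k) r = Φ v (b i) := fun i => h i
    choose rr hrr using h'
    have hvrepr := dual_repr hnondeg b c hc v
    rw [hvrepr]
    refine Submodule.sum_mem _ fun i _ => ?_
    rw [← hrr i, algebraMap_smul]
    exact Submodule.smul_mem _ _ (Submodule.subset_span ⟨i, rfl⟩)
  · rw [Submodule.span_le]
    rintro _ ⟨i, rfl⟩
    rw [SetLike.mem_coe, mem_sharp_span]
    rintro x ⟨j, rfl⟩
    rw [hc i j]
    split
    · exact one_mem _
    · exact zero_mem _

end AffLat
namespace AffLat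

variable {k : Type*} [Field k]
variable {V : Type*} [AddCommGroup V] [Module (LaurentSeries k) V]
  [Module (PowerSeries k) V] [IsScalarTower (PowerSeries k) (LaurentSeries k) V]
variable {Φ : V →ₗ[LaurentSeries k] V →ₗ[LaurentSeries k] LaurentSeries k}

theorem sharp_isLat_and (halt : ∀ v : V, Φ v v = 0)
    (hnondeg : ∀ v : V, (∀ w : V, Φ v w = 0) → v = 0)
    [FiniteDimensional (LaurentSeries k) V]
    {L : Submodule (PowerSeries k) V} (hL : IsLat L) :
    IsLat (sharp Φ L) ∧ sharp Φ (sharp Φ L) = L := by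
  obtain ⟨m, b, rfl⟩ := lat_basis hL
  obtain ⟨c, hc⟩ := exists_dual_family hnondeg b
  have h1 : sharp Φ (Submodule.span (PowerSeries k) (Set.range ⇑b))
      = Submodule.span (PowerSeries k) (Set.range c) := sharp_span_eq hnondeg b c hc
  have hindep : LinearIndependent (LaurentSeries k) c := by
    rw [Fintype.linearIndependent_iff]
    intro g hg i
    have h := phi_sum (Φ := Φ) b c hc g i
    rw [hg, map_zero, LinearMap.zero_apply] at h
    exact h.symm
  have hspan : ⊤ ≤ Submodule.span (LaurentSeries k) (Set.range c) := by
    intro v _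
    rw [dual_repr hnondeg b c hc v]
    exact Submodule.sum_mem _ fun i _ =>
      Submodule.smul_mem _ _ (Submodule.subset_span ⟨i, rfl⟩)
  let cb : Module.Basis (Fin m) (LaurentSeries k) V := Module.Basis.mk hindep hspan
  have hcb : ⇑cb = c := Module.Basis.coe_mk _ _
  have hd : ∀ i j, Φ ((fun l => -(b l)) i) (cb j) = if i = j then 1 else 0 := by
    intro i j
    show Φ (-(b i)) (cb j) = _
    rw [hcb, map_neg, LinearMap.neg_apply, skew halt (b i) (c j), neg_neg, hc j i]
    exact if_congr eq_comm rfl rfl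
  have h2 : sharp Φ (Submodule.span (PowerSeries k) (Set.range ⇑cb))
      = Submodule.span (PowerSeries k) (Set.range (fun l => -(b l))) :=
    sharp_span_eq hnondeg cb (fun l => -(b l)) hd
  have h3 : Submodule.span (PowerSeries k) (Set.range (fun l => -(b l)))
      = Submodule.span (PowerSeries k) (Set.range ⇑b) := by
    apply le_antisymm <;> rw [Submodule.span_le] <;> rintro _ ⟨i, rfl⟩
    · exact Submodule.neg_mem _ (Submodule.subset_span ⟨i, rfl⟩)
    · have hbi : b i = -((fun l => -(b l)) i) := by simp
      rw [SetLike.mem_coe, hbi]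
      exact Submodule.neg_mem _ (Submodule.subset_span ⟨i, rfl⟩)
  have hrange : Set.range c = Set.range ⇑cb := by rw [hcb]
  constructor
  · rw [h1]
    refine ⟨Submodule.fg_span (Set.finite_range c), ?_⟩
    rw [eq_top_iff]
    exact le_trans hspan (Submodule.span_mono Submodule.subset_span)
  · rw [h1, hrange, h2, h3]

theorem sharp_isLat (halt : ∀ v : V, Φ v v = 0)
    (hnondeg : ∀ v : V, (∀ w : V, Φ v w = 0) → v = 0)
    [FiniteDimensional (LaurentSeries k) V]
    {L : Submodule (PowerSeries k) V} (hL : IsLat L) : IsLat (sharp Φ L) :=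
  (sharp_isLat_and halt hnondeg hL).1

theorem sharp_sharp (halt : ∀ v : V, Φ v v = 0)
    (hnondeg : ∀ v : V, (∀ w : V, Φ v w = 0) → v = 0)
    [FiniteDimensional (LaurentSeries k) V]
    {L : Submodule (PowerSeries k) V} (hL : IsLat L) : sharp Φ (sharp Φ L) = L :=
  (sharp_isLat_and halt hnondeg hL).2

theorem isLat_sup {A B : Submodule (PowerSeries k) V} (hA : IsLat A) (hB : IsLat B) :
    IsLat (A ⊔ B) := by
  refine ⟨hA.1.sup hB.1, ?_⟩
  rw [eq_top_iff, ← hA.2]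
  exact Submodule.span_mono (SetLike.coe_subset_coe.mpr le_sup_left)

theorem sharp_inf (halt : ∀ v : V, Φ v v = 0)
    (hnondeg : ∀ v : V, (∀ w : V, Φ v w = 0) → v = 0)
    [FiniteDimensional (LaurentSeries k) V]
    {A B : Submodule (PowerSeries k) V} (hA : IsLat A) (hB : IsLat B) :
    sharp Φ (A ⊓ B) = sharp Φ A ⊔ sharp Φ B := by
  have hsup : IsLat (sharp Φ A ⊔ sharp Φ B) :=
    isLat_sup (sharp_isLat halt hnondeg hA) (sharp_isLat halt hnondeg hB)
  have h1 : sharp Φ (sharp Φ A ⊔ sharp Φ B) = A ⊓ B := by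
    rw [sharp_sup, sharp_sharp halt hnondeg hA, sharp_sharp halt hnondeg hB]
  rw [← h1, sharp_sharp halt hnondeg hsup]

end AffLat
namespace AffLat

variable {k : Type*} [Field k]
variable {V : Type*} [AddCommGroup V] [Module (LaurentSeries k) V]
  [Module (PowerSeries k) V] [IsScalarTower (PowerSeries k) (LaurentSeries k) V]
variable {Φ : V →ₗ[LaurentSeries k] V →ₗ[LaurentSeries k] LaurentSeries k}
variable {n : ℕ} {L L' : ℤ → Submodule (PowerSeries k) V}

theorem chain_mono (hX : IsXc Φ n L) {i j : ℤ} (hij : i ≤ j) : L i ≤ L j := by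
  have h : ∀ m : ℕ, L i ≤ L (i + m) := by
    intro m
    induction m with
    | zero => simp
    | succ m ih =>
      refine ih.trans ?_
      have h2 := hX.2.1 (i + m)
      rwa [show (i + (m : ℤ) + 1 : ℤ) = i + ((m + 1 : ℕ) : ℤ) by push_cast; ring] at h2
  have h3 := h (j - i).toNat
  rwa [show (i + (((j - i).toNat : ℕ) : ℤ)) = j by omega] at h3

theorem chain_eps_smul (hX : IsXc Φ n L) {i : ℤ} {x : V} (hx : x ∈ L i) :
    (PowerSeries.X : PowerSeries k) • x ∈ L (i - n) := by
  rw [← eps_smul_eq]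
  refine (hX.2.2.1 (i - n) (eps k • x)).mpr ⟨x, ?_, rfl⟩
  rw [show (i - (n : ℤ) + (n : ℤ)) = i by ring]
  exact hx

theorem chain_eps_smul_le (hX : IsXc Φ n L) (hn : 1 ≤ n) {i j : ℤ} (hij : i - 1 ≤ j)
    {x : V} (hx : x ∈ L i) : (PowerSeries.X : PowerSeries k) • x ∈ L j := by
  refine chain_mono hX ?_ (chain_eps_smul hX hx)
  omega

/-- The orthogonality relation from the self-duality of the chain. -/
theorem pair_mem (hX : IsXc Φ n L) {u u' : ℤ} (h : u + u' ≤ -1) {x y : V}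
    (hx : x ∈ L u) (hy : y ∈ L u') : Φ x y ∈ oring k := by
  have hsh := hX.2.2.2 (-u - 1)
  rw [show (-(-u - 1) - 1 : ℤ) = u by ring] at hsh
  rw [← hsh] at hx
  exact hx y (chain_mono hX (by omega) hy)

theorem pair_mem' (halt : ∀ v : V, Φ v v = 0) (hX : IsXc Φ n L) {u u' : ℤ}
    (h : u + u' ≤ -1) {x y : V} (hx : x ∈ L u) (hy : y ∈ L u') : Φ y x ∈ oring k := by
  rw [skew halt y x]
  exact neg_mem (pair_mem hX h hx hy)

/-- Generalized orthogonality for the sum-of-intersection submodules. -/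
theorem ortho_gen (halt : ∀ v : V, Φ v v = 0) (hX : IsXc Φ n L) (hX' : IsXc Φ n L')
    {a b c a' b' c' : ℤ} (h00 : a + a' ≤ -1) (h01 : a + b' ≤ -1) (h10 : b + a' ≤ -1)
    (hcc : c + c' ≤ -1) {x y : V}
    (hx : x ∈ L a ⊔ (L b ⊓ L' c)) (hy : y ∈ L a' ⊔ (L b' ⊓ L' c')) :
    Φ x y ∈ oring k := by
  obtain ⟨xa, hxa, xm, hxm, rfl⟩ := Submodule.mem_sup.mp hx
  obtain ⟨ya, hya, ym, hym, rfl⟩ := Submodule.mem_sup.mp hy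
  simp only [map_add, LinearMap.add_apply]
  refine add_mem (add_mem ?_ ?_) (add_mem ?_ ?_)
  · exact pair_mem hX h00 hxa hya
  · exact pair_mem hX (by omega) hxm.1 hya
  · exact pair_mem' halt hX (by omega) hym.1 hxa
  · exact pair_mem' halt hX' (by omega) hym.2 hxm.2

end AffLat
namespace AffLat

variable {k : Type*} [Field k]
variable {V : Type*} [AddCommGroup V] [Module (LaurentSeries k) V]
  [Module (PowerSeries k) V] [IsScalarTower (PowerSeries k) (LaurentSeries k) V]

theorem quot_X_smul_zero {p s : Submodule (PowerSeries k) V}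
    (hps : ∀ x ∈ p, (PowerSeries.X : PowerSeries k) • x ∈ s) (q : relQ p s) :
    (PowerSeries.X : PowerSeries k) • q = 0 := by
  obtain ⟨x, rfl⟩ := Submodule.Quotient.mk_surjective _ q
  rw [← Submodule.Quotient.mk_smul, Submodule.Quotient.mk_eq_zero]
  exact hps (x : V) x.2

theorem kfinite_of {p s : Submodule (PowerSeries k) V} (hp : p.FG)
    (hps : ∀ x ∈ p, (PowerSeries.X : PowerSeries k) • x ∈ s) :
    kfinite k (relQ p s) := by
  haveI : Module.Finite (PowerSeries k) ↥p := Module.Finite.iff_fg.mpr hp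
  haveI hfin : Module.Finite (PowerSeries k) (relQ p s) :=
    Module.Finite.of_surjective (Submodule.mkQ _) (Submodule.Quotient.mk_surjective _)
  obtain ⟨S, hS⟩ := hfin.fg_top
  letI : Module k (relQ p s) := Module.compHom _ (PowerSeries.C)
  show FiniteDimensional k (relQ p s)
  refine ⟨⟨S, ?_⟩⟩
  rw [eq_top_iff]
  rintro q -
  have hq : q ∈ Submodule.span (PowerSeries k) (S : Set (relQ p s)) := by
    rw [hS]; trivial
  induction hq using Submodule.span_induction with
  | mem x hx => exact Submodule.subset_span hx
  | zero => exact Submodule.zero_mem _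
  | add x y _ _ hx hy => exact Submodule.add_mem _ hx hy
  | smul r x _ hx =>
      have hd : PowerSeries.X ∣ (r - PowerSeries.C (PowerSeries.constantCoeff r)) :=
        PowerSeries.X_dvd_iff.mpr (by simp)
      obtain ⟨r', hr'⟩ := hd
      have h1 : r • x = (PowerSeries.constantCoeff r) • x := by
        have h2 : r • x = PowerSeries.C (PowerSeries.constantCoeff r) • x
            + (PowerSeries.X * r') • x := by
          rw [← hr', ← add_smul]
          congr 1
          ring
        rw [h2, mul_smul, quot_X_smul_zero hps, add_zero]
        rfl
      rw [h1]
      exact Submodule.smul_mem _ _ hx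

theorem kdim_eq_of_pairing {Q Q' : Type*} [AddCommGroup Q] [Module (PowerSeries k) Q]
    [AddCommGroup Q'] [Module (PowerSeries k) Q']
    (hQ : kfinite k Q) (hQ' : kfinite k Q')
    (B : Q → Q' → k)
    (hadd1 : ∀ q₁ q₂ q', B (q₁ + q₂) q' = B q₁ q' + B q₂ q')
    (hadd2 : ∀ q q₁ q₂, B q (q₁ + q₂) = B q q₁ + B q q₂)
    (h1 : ∀ (a : k) (q : Q) (q' : Q'), B ((PowerSeries.C a) • q) q' = a * B q q')
    (h2 : ∀ (a : k) (q : Q) (q' : Q'), B q ((PowerSeries.C a) • q') = a * B q q')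
    (hl : ∀ q, (∀ q', B q q' = 0) → q = 0)
    (hr : ∀ q', (∀ q, B q q' = 0) → q' = 0) :
    kdim k Q = kdim k Q' := by
  letI : Module k Q := Module.compHom _ (PowerSeries.C)
  letI : Module k Q' := Module.compHom _ (PowerSeries.C)
  haveI : FiniteDimensional k Q := hQ
  haveI : FiniteDimensional k Q' := hQ'
  have hB0 : ∀ q : Q, B q 0 = 0 := by
    intro q
    have h := hadd2 q 0 0
    rw [add_zero] at h
    exact (left_eq_add.mp h)
  have hB0' : ∀ q' : Q', B 0 q' = 0 := by
    intro q'
    have h := hadd1 0 0 q'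
    rw [add_zero] at h
    exact (left_eq_add.mp h)
  let B2 : Q → (Q' →ₗ[k] k) := fun q =>
    { toFun := B q
      map_add' := hadd2 q
      map_smul' := fun a q' => h2 a q q' }
  let B1 : Q →ₗ[k] (Q' →ₗ[k] k) :=
    { toFun := B2
      map_add' := fun q₁ q₂ => LinearMap.ext fun q' => hadd1 q₁ q₂ q'
      map_smul' := fun a q => LinearMap.ext fun q' => h1 a q q' }
  have hinj1 : Function.Injective B1 := by
    intro x y hxy
    have h : ∀ q', B (x - y) q' = 0 := by
      intro q'
      have hx : B x q' = B y q' := congrArg (fun f : Q' →ₗ[k] k => f q') hxy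
      have hsub : B (x - y) q' + B y q' = B x q' := by
        rw [← hadd1, sub_add_cancel]
      rw [hx] at hsub
      exact add_eq_right.mp hsub
    exact sub_eq_zero.mp (hl _ h)
  let C2 : Q' → (Q →ₗ[k] k) := fun q' =>
    { toFun := fun q => B q q'
      map_add' := fun q₁ q₂ => hadd1 q₁ q₂ q'
      map_smul' := fun a q => h1 a q q' }
  let C1 : Q' →ₗ[k] (Q →ₗ[k] k) :=
    { toFun := C2
      map_add' := fun q₁ q₂ => LinearMap.ext fun q => hadd2 q q₁ q₂
      map_smul' := fun a q' => LinearMap.ext fun q => h2 a q q' }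
  have hinj2 : Function.Injective C1 := by
    intro x y hxy
    have h : ∀ q, B q (x - y) = 0 := by
      intro q
      have hx : B q x = B q y := congrArg (fun f : Q →ₗ[k] k => f q) hxy
      have hsub : B q (x - y) + B q y = B q x := by
        rw [← hadd2, sub_add_cancel]
      rw [hx] at hsub
      exact add_eq_right.mp hsub
    exact sub_eq_zero.mp (hr _ h)
  have hle1 : Module.finrank k Q ≤ Module.finrank k Q' :=
    le_of_le_of_eq (LinearMap.finrank_le_finrank_of_injective hinj1)
      Subspace.dual_finrank_eq
  have hle2 : Module.finrank k Q' ≤ Module.finrank k Q :=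
    le_of_le_of_eq (LinearMap.finrank_le_finrank_of_injective hinj2)
      Subspace.dual_finrank_eq
  exact le_antisymm hle1 hle2

end AffLat
namespace AffLat

variable {k : Type*} [Field k]
variable {V : Type*} [AddCommGroup V] [Module (LaurentSeries k) V]
  [Module (PowerSeries k) V] [IsScalarTower (PowerSeries k) (LaurentSeries k) V]
variable {Φ : V →ₗ[LaurentSeries k] V →ₗ[LaurentSeries k] LaurentSeries k}
variable {n : ℕ} {L L' : ℤ → Submodule (PowerSeries k) V}

theorem eps_smul_P (hX : IsXc Φ n L) (hX' : IsXc Φ n L') (hn : 1 ≤ n) (i j : ℤ) {x : V}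
    (hx : x ∈ L (i - 1) ⊔ (L i ⊓ L' j)) :
    (PowerSeries.X : PowerSeries k) • x ∈ L (i - 1) ⊔ (L i ⊓ L' (j - 1)) := by
  obtain ⟨a, ha, m, hm, rfl⟩ := Submodule.mem_sup.mp hx
  rw [smul_add]
  refine Submodule.add_mem _ (Submodule.mem_sup_left ?_) (Submodule.mem_sup_right ⟨?_, ?_⟩)
  · exact chain_eps_smul_le hX hn (by omega) ha
  · exact chain_eps_smul_le hX hn (by omega) hm.1
  · exact chain_eps_smul_le hX' hn (by omega) hm.2

theorem P_fg (hX : IsXc Φ n L) (hX' : IsXc Φ n L') (i j : ℤ) :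
    (L (i - 1) ⊔ (L i ⊓ L' j)).FG :=
  ((hX.1 (i - 1)).1).sup (fg_of_le (hX.1 i).1 inf_le_left)

theorem kfinite_P (hX : IsXc Φ n L) (hX' : IsXc Φ n L') (hn : 1 ≤ n) (i j : ℤ) :
    kfinite k (relQ (L (i - 1) ⊔ (L i ⊓ L' j)) (L (i - 1) ⊔ (L i ⊓ L' (j - 1)))) :=
  kfinite_of (P_fg hX hX' i j) (fun x hx => eps_smul_P hX hX' hn i j hx)

theorem ndg1 (halt : ∀ v : V, Φ v v = 0)
    (hnondeg : ∀ v : V, (∀ w : V, Φ v w = 0) → v = 0)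
    [FiniteDimensional (LaurentSeries k) V]
    (hX : IsXc Φ n L) (hX' : IsXc Φ n L') (hn : 1 ≤ n) (i j : ℤ) {x : V}
    (hx : x ∈ L (i - 1) ⊔ (L i ⊓ L' j))
    (h : ∀ y ∈ L (-i - 1) ⊔ (L (-i) ⊓ L' (-j)), (Φ x y).coeff (-1) = 0) :
    x ∈ L (i - 1) ⊔ (L i ⊓ L' (j - 1)) := by
  have ho : ∀ y ∈ L (-i - 1) ⊔ (L (-i) ⊓ L' (-j)), Φ x y ∈ oring k := by
    intro y hy
    refine mem_oring_of_eps_mul ?_ (h y hy)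
    have h2 : (PowerSeries.X : PowerSeries k) • y ∈ L (-i - 1) ⊔ (L (-i) ⊓ L' (-j - 1)) :=
      eps_smul_P hX hX' hn (-i) (-j) hy
    have h3 : eps k * Φ x y = Φ x ((PowerSeries.X : PowerSeries k) • y) := by
      rw [← eps_smul_eq, map_smul, smul_eq_mul]
    rw [h3]
    exact ortho_gen halt hX hX' (by omega) (by omega) (by omega) (by omega) hx h2
  have hx' : x ∈ sharp Φ (L (-i) ⊓ L' (-j)) :=
    fun z hz => ho z (Submodule.mem_sup_right hz)
  rw [sharp_inf halt hnondeg (hX.1 (-i)) (hX'.1 (-j))] at hx'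
  have hsA : sharp Φ (L (-i)) = L (i - 1) := by
    have hq := hX.2.2.2 (-i)
    rw [show (-(-i) - 1 : ℤ) = i - 1 by ring] at hq
    exact hq
  have hsB : sharp Φ (L' (-j)) = L' (j - 1) := by
    have hq := hX'.2.2.2 (-j)
    rw [show (-(-j) - 1 : ℤ) = j - 1 by ring] at hq
    exact hq
  rw [hsA, hsB] at hx'
  obtain ⟨a, ha, bb, hbb, rfl⟩ := Submodule.mem_sup.mp hx'
  have hxLi : a + bb ∈ L i :=
    (sup_le (chain_mono hX (by omega)) inf_le_left : (L (i - 1) ⊔ (L i ⊓ L' j)) ≤ L i) hx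
  have hbbLi : bb ∈ L i := by
    have haLi : a ∈ L i := chain_mono hX (by omega) ha
    have hsub := Submodule.sub_mem _ hxLi haLi
    rwa [add_sub_cancel_left] at hsub
  exact Submodule.add_mem _ (Submodule.mem_sup_left ha) (Submodule.mem_sup_right ⟨hbbLi, hbb⟩)

theorem ndg2 (halt : ∀ v : V, Φ v v = 0)
    (hnondeg : ∀ v : V, (∀ w : V, Φ v w = 0) → v = 0)
    [FiniteDimensional (LaurentSeries k) V]
    (hX : IsXc Φ n L) (hX' : IsXc Φ n L') (hn : 1 ≤ n) (i j : ℤ) {y : V}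
    (hy : y ∈ L (-i - 1) ⊔ (L (-i) ⊓ L' (-j)))
    (h : ∀ x ∈ L (i - 1) ⊔ (L i ⊓ L' j), (Φ x y).coeff (-1) = 0) :
    y ∈ L (-i - 1) ⊔ (L (-i) ⊓ L' (-j - 1)) := by
  have h' : ∀ x ∈ L (-(-i) - 1) ⊔ (L (-(-i)) ⊓ L' (-(-j))), (Φ y x).coeff (-1) = 0 := by
    intro x hx
    simp only [neg_neg] at hx
    rw [skew halt y x, HahnSeries.coeff_neg, h x hx, neg_zero]
  exact ndg1 halt hnondeg hX hX' hn (-i) (-j) hy h'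

end AffLat
namespace AffLat

variable {k : Type*} [Field k]
variable {V : Type*} [AddCommGroup V] [Module (LaurentSeries k) V]
  [Module (PowerSeries k) V] [IsScalarTower (PowerSeries k) (LaurentSeries k) V]
variable {Φ : V →ₗ[LaurentSeries k] V →ₗ[LaurentSeries k] LaurentSeries k}
variable {n : ℕ} {L L' : ℤ → Submodule (PowerSeries k) V}

set_option maxHeartbeats 1000000 in
theorem kdim_symm (halt : ∀ v : V, Φ v v = 0)
    (hnondeg : ∀ v : V, (∀ w : V, Φ v w = 0) → v = 0)
    [FiniteDimensional (LaurentSeries k) V]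
    (hX : IsXc Φ n L) (hX' : IsXc Φ n L') (hn : 1 ≤ n) (i j : ℤ) :
    kdim k (relQ (L (-i - 1) ⊔ (L (-i) ⊓ L' (-j))) (L (-i - 1) ⊔ (L (-i) ⊓ L' (-j - 1)))) =
    kdim k (relQ (L (i - 1) ⊔ (L i ⊓ L' j)) (L (i - 1) ⊔ (L i ⊓ L' (j - 1)))) := by
  set P : Submodule (PowerSeries k) V := L (i - 1) ⊔ (L i ⊓ L' j) with hPdef
  set S : Submodule (PowerSeries k) V := L (i - 1) ⊔ (L i ⊓ L' (j - 1)) with hSdef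
  set P' : Submodule (PowerSeries k) V := L (-i - 1) ⊔ (L (-i) ⊓ L' (-j)) with hP'def
  set S' : Submodule (PowerSeries k) V := L (-i - 1) ⊔ (L (-i) ⊓ L' (-j - 1)) with hS'def
  -- orthogonality of S with P' and of P with S'
  have hP1 : ∀ x ∈ S, ∀ y ∈ P', Φ x y ∈ oring k := by
    intro x hx y hy
    exact ortho_gen halt hX hX' (by omega) (by omega) (by omega) (by omega) hx hy
  have hP2 : ∀ x ∈ P, ∀ y ∈ S', Φ x y ∈ oring k := by
    intro x hx y hy
    exact ortho_gen halt hX hX' (by omega) (by omega) (by omega) (by omega) hx hy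
  -- the pairing on the quotients
  let f : ↥P' → (↥P →+ k) := fun y =>
    AddMonoidHom.mk' (fun x => (Φ (x : V) (y : V)).coeff (-1)) (by
      intro x₁ x₂
      show (Φ ((x₁ : V) + (x₂ : V)) (y : V)).coeff (-1) = _
      rw [map_add, LinearMap.add_apply, HahnSeries.coeff_add])
  have hf0 : ∀ y : ↥P', ∀ x ∈ (S.comap P.subtype).toAddSubgroup, f y x = 0 := by
    intro y x hx
    show (Φ (x : V) (y : V)).coeff (-1) = 0
    exact mem_oring_iff.mp (hP1 (x : V) hx (y : V) y.2) (-1) (by norm_num)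
  let g : ↥P' → (relQ P S →+ k) := fun y =>
    QuotientAddGroup.lift (S.comap P.subtype).toAddSubgroup (f y) (hf0 y)
  have hgadd : ∀ y₁ y₂ : ↥P', g (y₁ + y₂) = g y₁ + g y₂ := by
    intro y₁ y₂
    apply AddMonoidHom.ext
    intro q
    obtain ⟨x, rfl⟩ := Submodule.Quotient.mk_surjective _ q
    show (Φ (x : V) ((y₁ : V) + (y₂ : V))).coeff (-1)
      = (Φ (x : V) (y₁ : V)).coeff (-1) + (Φ (x : V) (y₂ : V)).coeff (-1)
    rw [map_add, HahnSeries.coeff_add]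
  have hg0 : ∀ y ∈ (S'.comap P'.subtype).toAddSubgroup,
      AddMonoidHom.mk' g hgadd y = 0 := by
    intro y hy
    apply AddMonoidHom.ext
    intro q
    obtain ⟨x, rfl⟩ := Submodule.Quotient.mk_surjective _ q
    show (Φ (x : V) (y : V)).coeff (-1) = 0
    exact mem_oring_iff.mp (hP2 (x : V) x.2 (y : V) hy) (-1) (by norm_num)
  let Bq : relQ P' S' →+ (relQ P S →+ k) :=
    QuotientAddGroup.lift (S'.comap P'.subtype).toAddSubgroup
      (AddMonoidHom.mk' g hgadd) hg0
  refine kdim_eq_of_pairing (kfinite_P hX hX' hn (-i) (-j)) (kfinite_P hX hX' hn i j)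
    (fun q' q => Bq q' q) ?_ ?_ ?_ ?_ ?_ ?_
  · intro q₁ q₂ q'
    show Bq (q₁ + q₂) q' = Bq q₁ q' + Bq q₂ q'
    rw [map_add, AddMonoidHom.add_apply]
  · intro q q₁ q₂
    exact (Bq q).map_add q₁ q₂
  · -- C a • on the P'-side (first slot)
    intro a q q'
    obtain ⟨y, rfl⟩ := Submodule.Quotient.mk_surjective _ q
    obtain ⟨x, rfl⟩ := Submodule.Quotient.mk_surjective _ q'
    show Bq (PowerSeries.C a • Submodule.Quotient.mk y) (Submodule.Quotient.mk x)
      = a * Bq (Submodule.Quotient.mk y) (Submodule.Quotient.mk x)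
    have hmk : (PowerSeries.C a) • (Submodule.Quotient.mk y : relQ P' S')
        = Submodule.Quotient.mk (PowerSeries.C a • y) := by
      rw [Submodule.Quotient.mk_smul]
    rw [hmk]
    show (Φ (x : V) ((PowerSeries.C a • y : ↥P') : V)).coeff (-1)
      = a * (Φ (x : V) (y : V)).coeff (-1)
    have hco : ((PowerSeries.C a • y : ↥P') : V) = PowerSeries.C a • (y : V) := rfl
    rw [hco, ← algebraMap_smul (LaurentSeries k) (PowerSeries.C a) (y : V), map_smul,
      smul_eq_mul, C_mul_coeff]
  · intro a q q'
    obtain ⟨y, rfl⟩ := Submodule.Quotient.mk_surjective _ q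
    obtain ⟨x, rfl⟩ := Submodule.Quotient.mk_surjective _ q'
    show Bq (Submodule.Quotient.mk y) (PowerSeries.C a • Submodule.Quotient.mk x)
      = a * Bq (Submodule.Quotient.mk y) (Submodule.Quotient.mk x)
    have hmk : (PowerSeries.C a) • (Submodule.Quotient.mk x : relQ P S)
        = Submodule.Quotient.mk (PowerSeries.C a • x) := by
      rw [Submodule.Quotient.mk_smul]
    rw [hmk]
    show (Φ ((PowerSeries.C a • x : ↥P) : V) (y : V)).coeff (-1)
      = a * (Φ (x : V) (y : V)).coeff (-1)
    have hco : ((PowerSeries.C a • x : ↥P) : V) = PowerSeries.C a • (x : V) := rfl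
    rw [hco, ← algebraMap_smul (LaurentSeries k) (PowerSeries.C a) (x : V), map_smul,
      LinearMap.smul_apply, smul_eq_mul, C_mul_coeff]
  · -- left nondegeneracy
    intro q hq
    obtain ⟨y, rfl⟩ := Submodule.Quotient.mk_surjective _ q
    rw [Submodule.Quotient.mk_eq_zero]
    show (y : V) ∈ S'
    refine ndg2 halt hnondeg hX hX' hn i j y.2 ?_
    intro x hx
    exact hq (Submodule.Quotient.mk (⟨x, hx⟩ : ↥P))
  · -- right nondegeneracy
    intro q' hq'
    obtain ⟨x, rfl⟩ := Submodule.Quotient.mk_surjective _ q'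
    rw [Submodule.Quotient.mk_eq_zero]
    show (x : V) ∈ S
    refine ndg1 halt hnondeg hX hX' hn i j x.2 ?_
    intro y hy
    exact hq' (Submodule.Quotient.mk (⟨y, hy⟩ : ↥P'))
  
end AffLat

open AffLat

/-- Let `L, L′ ∈ X^c_{n,d}`.  For all `i, j ∈ ℤ` the quotient
`(L_{i-1} + L_i ∩ L′_j)/(L_{i-1} + L_i ∩ L′_{j-1})` is a finite-dimensional `k`-vector space,
and with `a_{ij}` its dimension over `k` one has `a_{-i,-j} = a_{ij}` for all `i, j`. -/
theorem statement10 {k : Type*} [Field k] [Fintype k] (hodd : Odd (Fintype.card k))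
    {V : Type*} [AddCommGroup V] [Module (LaurentSeries k) V]
    [Module (PowerSeries k) V] [IsScalarTower (PowerSeries k) (LaurentSeries k) V]
    [FiniteDimensional (LaurentSeries k) V]
    (r d : ℕ)
    (hdim : Module.finrank (LaurentSeries k) V = 2 * d)
    (Φ : V →ₗ[LaurentSeries k] V →ₗ[LaurentSeries k] LaurentSeries k)
    (halt : ∀ v : V, Φ v v = 0)
    (hnondeg : ∀ v : V, (∀ w : V, Φ v w = 0) → v = 0)
    (L L' : ℤ → Submodule (PowerSeries k) V)
    (hL : IsXc Φ (2 * r + 2) L) (hL' : IsXc Φ (2 * r + 2) L') :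
    (∀ i j : ℤ,
      kfinite k (relQ ((L (i - 1)) ⊔ (L i ⊓ L' j)) ((L (i - 1)) ⊔ (L i ⊓ L' (j - 1))))) ∧
    (∀ i j : ℤ,
      kdim k (relQ ((L (-i - 1)) ⊔ (L (-i) ⊓ L' (-j))) ((L (-i - 1)) ⊔ (L (-i) ⊓ L' (-j - 1)))) =
      kdim k (relQ ((L (i - 1)) ⊔ (L i ⊓ L' j)) ((L (i - 1)) ⊔ (L i ⊓ L' (j - 1))))) := by
  constructor
  · intro i j
    exact kfinite_P hL hL' (by omega) i j
  · intro i j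
    exact kdim_symm halt hnondeg hL hL' (by omega) i j
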